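/- Let {ι,κ} = {σ,τ}, let π be an irreducible generic representation of GL_n(E), and let ψ be a non-degenerate character of N(E) with ψ^κ = ψ. Then the linear form μ_κ on W(π,ψ) defined by μ_κ(W) = (1/|G_ι|)·Σ_{g∈X_κ} W(g) is a ψ-Whittaker functional: for every n ∈ N(E) and every W ∈ W(π,ψ), μ_κ(π(n)W) = ψ(n)·μ_κ(W). -/

import Mathlib

set_option linter.unusedSectionVars false

open Matrix Finset

noncomputable section

namespace TestVectors

variable {n : ℕ} {E : Type*} [Field E] [Fintype E] [DecidableEq E]

/-- The predicate of being an upper triangular unipotent matrix. -/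
def IsUniUp (g : GL (Fin n) E) : Prop :=
  (∀ i j : Fin n, j < i → (g : Matrix (Fin n) (Fin n) E) i j = 0) ∧
  (∀ i : Fin n, (g : Matrix (Fin n) (Fin n) E) i i = 1)

instance : DecidablePred (IsUniUp (n := n) (E := E)) := fun g => by
  unfold IsUniUp; exact @instDecidableAnd _ _ (@Fintype.decidableForallFintype _ _ (fun _ => Fintype.decidableForallFintype) _) inferInstance

/-- The group `N(E)` of upper triangular unipotent matrices, as a finset. -/
def uniFinset (n : ℕ) (E : Type*) [Field E] [Fintype E] [DecidableEq E] :
    Finset (GL (Fin n) E) := Finset.univ.filter IsUniUp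

/-- The entrywise action of a field automorphism on `GL_n`. -/
def entrywiseHom (n : ℕ) (σ₀ : E ≃+* E) : GL (Fin n) E →* GL (Fin n) E :=
  Units.map (RingHom.mapMatrix (σ₀ : E →+* E)).toMonoidHom

/-- transpose, as a map `GL_n → GL_n`. -/
def transposeGL (g : GL (Fin n) E) : GL (Fin n) E where
  val := (g : Matrix (Fin n) (Fin n) E)ᵀ
  inv := ((g⁻¹ : GL (Fin n) E) : Matrix (Fin n) (Fin n) E)ᵀ
  val_inv := by
    rw [← Matrix.transpose_mul, ← Units.val_mul, inv_mul_cancel, Units.val_one,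
      Matrix.transpose_one]
  inv_val := by
    rw [← Matrix.transpose_mul, ← Units.val_mul, mul_inv_cancel, Units.val_one,
      Matrix.transpose_one]

lemma transposeGL_mul (g h : GL (Fin n) E) :
    transposeGL (g * h) = transposeGL h * transposeGL g := by
  ext
  simp [transposeGL, Matrix.transpose_mul]

lemma transposeGL_one : transposeGL (1 : GL (Fin n) E) = 1 := by
  ext; simp [transposeGL]

/-- The antidiagonal permutation matrix `J`. -/
def Jmat (n : ℕ) (E : Type*) [Field E] : Matrix (Fin n) (Fin n) E :=
  Matrix.of fun i j => if j = i.rev then 1 else 0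

lemma Jmat_mul_Jmat : Jmat n E * Jmat n E = 1 := by
  ext i k
  simp only [Jmat, Matrix.mul_apply, Matrix.of_apply, Matrix.one_apply, ite_mul, one_mul,
    zero_mul]
  rw [Finset.sum_eq_single i.rev]
  · simp [Fin.rev_rev, eq_comm]
  · intro b _ hb; simp [hb]
  · simp

/-- The antidiagonal permutation matrix `J` as an element of `GL_n`. -/
def Jgl (n : ℕ) (E : Type*) [Field E] [Fintype E] [DecidableEq E] : GL (Fin n) E where
  val := Jmat n E
  inv := Jmat n E
  val_inv := Jmat_mul_Jmat
  inv_val := Jmat_mul_Jmat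

/-- The involution `τ : g ↦ J ᵗg^{-σ} J⁻¹` of `GL_n(E)`. -/
def tauHom (n : ℕ) (σ₀ : E ≃+* E) : GL (Fin n) E →* GL (Fin n) E where
  toFun g := Jgl n E * transposeGL ((entrywiseHom n σ₀ g)⁻¹) * (Jgl n E)⁻¹
  map_one' := by simp [transposeGL_one]
  map_mul' g h := by
    rw [show (entrywiseHom n σ₀) (g * h) = entrywiseHom n σ₀ g * entrywiseHom n σ₀ h from map_mul _ g h, _root_.mul_inv_rev, transposeGL_mul]
    group

/-- The subgroup of fixed points of an endomorphism of a group. -/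
def fixedSubgroup {G : Type*} [Group G] (φ : G →* G) : Subgroup G where
  carrier := {g | φ g = g}
  mul_mem' := by
    intro a b ha hb
    simp only [Set.mem_setOf_eq] at *
    rw [_root_.map_mul, ha, hb]
  one_mem' := map_one φ
  inv_mem' := by
    intro a ha
    simp only [Set.mem_setOf_eq] at *
    rw [_root_.map_inv, ha]

/-- The fixed points of an endomorphism of `GL_n(E)`, as a finset. -/
def fixFinset (φ : GL (Fin n) E →* GL (Fin n) E) : Finset (GL (Fin n) E) :=
  Finset.univ.filter fun g => φ g = g

/-- The set `X_φ` of "norm one" elements `g φ(g) = 1`, as a finset. -/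
def normOneFinset (φ : GL (Fin n) E →* GL (Fin n) E) : Finset (GL (Fin n) E) :=
  Finset.univ.filter fun g => g * φ g = 1

/-- `ψ` is a non-degenerate character of the group `N(E)` of upper triangular unipotent
matrices: it is multiplicative and non-vanishing on `N(E)`, and non-trivial on each simple
root subgroup. -/
def IsNondegChar (ψ : GL (Fin n) E → ℂ) : Prop :=
  (∀ u v : GL (Fin n) E, IsUniUp u → IsUniUp v → ψ (u * v) = ψ u * ψ v) ∧
  (∀ u : GL (Fin n) E, IsUniUp u → ψ u ≠ 0) ∧
  (∀ i : Fin n, ∀ h : (i : ℕ) + 1 < n,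
    ∃ u : GL (Fin n) E, IsUniUp u ∧
      (∀ a b : Fin n, a ≠ b → ¬(a = i ∧ b = ⟨(i : ℕ) + 1, h⟩) →
        (u : Matrix (Fin n) (Fin n) E) a b = 0) ∧
      ψ u ≠ 1)

section Reps

variable {G : Type*} [Group G] {V : Type*} [AddCommGroup V] [Module ℂ V]
  {W : Type*} [AddCommGroup W] [Module ℂ W]

/-- The character of a representation. -/
def repChar (ρ : Representation ℂ G V) (g : G) : ℂ :=
  LinearMap.trace ℂ V (ρ g)

/-- A submodule invariant under a representation. -/
def IsRepStable (ρ : Representation ℂ G V) (S : Submodule ℂ V) : Prop :=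
  ∀ g : G, ∀ v ∈ S, ρ g v ∈ S

/-- Irreducibility of a representation. -/
def IsIrreducibleRep (ρ : Representation ℂ G V) : Prop :=
  Nontrivial V ∧ ∀ S : Submodule ℂ V, IsRepStable ρ S → S = ⊥ ∨ S = ⊤

/-- Isomorphism of representations of a fixed group. -/
def RepIso (ρ : Representation ℂ G V) (π : Representation ℂ G W) : Prop :=
  ∃ e : V ≃ₗ[ℂ] W, ∀ g v, e (ρ g v) = π g (e v)

/-- A representation is distinguished by a subset `S` of the group if it admits a non-zero
vector invariant under `S`. -/
def IsDistinguished (ρ : Representation ℂ G V) (S : Set G) : Prop :=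
  ∃ v : V, v ≠ 0 ∧ ∀ g ∈ S, ρ g v = v

/-- The submodule of `S`-invariant vectors of a representation. -/
def invariantVectors (ρ : Representation ℂ G V) (S : Set G) : Submodule ℂ V where
  carrier := {v | ∀ g ∈ S, ρ g v = v}
  add_mem' := by
    intro a b ha hb g hg
    rw [_root_.map_add, ha g hg, hb g hg]
  zero_mem' := by
    intro g hg
    simp
  smul_mem' := by
    intro c a ha g hg
    rw [_root_.map_smul, ha g hg]

/-- The space of `S`-invariant linear forms on a representation. -/
def invariantForms (ρ : Representation ℂ G V) (S : Set G) : Submodule ℂ (V →ₗ[ℂ] ℂ) where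
  carrier := {L | ∀ g ∈ S, ∀ v, L (ρ g v) = L v}
  add_mem' := by
    intro a b ha hb g hg v
    simp [ha g hg v, hb g hg v]
  zero_mem' := by intro g hg v; simp
  smul_mem' := by
    intro c a ha g hg v
    simp [ha g hg v]

end Reps

/-- The (normalized) Bessel function of a representation `π` of `GL_n(E)` with respect to the
character `ψ` of `N(E)`: `B_π(g) = |N(E)|⁻¹ ∑_{u ∈ N(E)} ψ(u)⁻¹ χ_π(gu)`. -/
def Bessel {V : Type*} [AddCommGroup V] [Module ℂ V] (ψ : GL (Fin n) E → ℂ)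
    (π : Representation ℂ (GL (Fin n) E) V) (g : GL (Fin n) E) : ℂ :=
  ((uniFinset n E).card : ℂ)⁻¹ * ∑ u ∈ uniFinset n E, (ψ u)⁻¹ * repChar π (g * u)

/-- A representation of `GL_n(E)` is `ψ`-generic if it admits a non-zero `ψ`-Whittaker
functional, equivalently if it embeds in `Ind_{N(E)}^{GL_n(E)} ψ`. -/
def IsGeneric {V : Type*} [AddCommGroup V] [Module ℂ V] (ψ : GL (Fin n) E → ℂ)
    (π : Representation ℂ (GL (Fin n) E) V) : Prop :=
  ∃ ℓ : V →ₗ[ℂ] ℂ, ℓ ≠ 0 ∧ ∀ u : GL (Fin n) E, IsUniUp u → ∀ v, ℓ (π u v) = ψ u * ℓ v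

/-- Membership in the `ψ`-Whittaker model `W(π,ψ)` of an irreducible generic representation
`π`: the function is left `(N(E),ψ)`-equivariant, and it lies in the `π`-isotypic component of
the right regular representation (cut out by the projector attached to the character of `π`). -/
def InWhittakerModel {V : Type*} [AddCommGroup V] [Module ℂ V] (ψ : GL (Fin n) E → ℂ)
    (π : Representation ℂ (GL (Fin n) E) V) (W : GL (Fin n) E → ℂ) : Prop :=
  (∀ u g : GL (Fin n) E, IsUniUp u → W (u * g) = ψ u * W g) ∧
  (∀ x : GL (Fin n) E,
    ((Module.finrank ℂ V : ℂ) / (Fintype.card (GL (Fin n) E) : ℂ)) *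
      ∑ g : GL (Fin n) E, repChar π g⁻¹ * W (x * g) = W x)

/-- `π` is a base change lift of the representation `ρ` of the fixed points of `κ`:
there is an intertwiner `T` between `π` and `π ∘ κ` such that
`Trace(π(g) ∘ T) = χ_ρ(g ⬝ κ(g))`, the latter being evaluated by conjugating `g ⬝ κ(g)`
into the fixed point subgroup. -/
def IsBaseChange {V : Type*} [AddCommGroup V] [Module ℂ V] {Vρ : Type*} [AddCommGroup Vρ]
    [Module ℂ Vρ] (κ : GL (Fin n) E →* GL (Fin n) E)
    (π : Representation ℂ (GL (Fin n) E) V)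
    (ρ : Representation ℂ ↥(fixedSubgroup κ) Vρ) : Prop :=
  ∃ T : V →ₗ[ℂ] V,
    (∀ g : GL (Fin n) E, π g ∘ₗ T = T ∘ₗ π (κ g)) ∧
    ∀ (g x : GL (Fin n) E) (h : ↥(fixedSubgroup κ)),
      g * κ g = x * (h : GL (Fin n) E) * x⁻¹ →
      LinearMap.trace ℂ V (π g ∘ₗ T) = repChar ρ h

/-- The mirabolic condition: the last row is `(0,…,0,1)`. -/
def IsMirabolic (g : GL (Fin n) E) : Prop :=
  ∀ i j : Fin n, n - 1 ≤ (i : ℕ) →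
    (g : Matrix (Fin n) (Fin n) E) i j = (1 : Matrix (Fin n) (Fin n) E) i j

instance : DecidablePred (IsMirabolic (n := n) (E := E)) := fun g => by
  unfold IsMirabolic; exact @Fintype.decidableForallFintype _ _ (fun _ => Fintype.decidableForallFintype) _


section Aux

lemma isUniUp_one : IsUniUp (1 : GL (Fin n) E) := by
  constructor
  · intro i j hij
    simp [Matrix.one_apply, (Fin.ne_of_lt hij).symm]
  · intro i; simp

lemma IsUniUp.mul' {u v : GL (Fin n) E} (hu : IsUniUp u) (hv : IsUniUp v) :
    IsUniUp (u * v) := by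
  constructor
  · intro i j hij
    rw [Units.val_mul, Matrix.mul_apply]
    refine Finset.sum_eq_zero fun k _ => ?_
    rcases lt_or_ge k i with hk | hk
    · rw [hu.1 i k hk, zero_mul]
    · rw [hv.1 k j (lt_of_lt_of_le hij hk), mul_zero]
  · intro i
    rw [Units.val_mul, Matrix.mul_apply]
    rw [Finset.sum_eq_single i]
    · rw [hu.2 i, hv.2 i, one_mul]
    · intro k _ hk
      rcases lt_or_gt_of_ne hk with h | h
      · rw [hu.1 i k h, zero_mul]
      · rw [hv.1 k i h, mul_zero]
    · simp

lemma IsUniUp.pow' {u : GL (Fin n) E} (hu : IsUniUp u) (k : ℕ) : IsUniUp (u ^ k) := by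
  induction k with
  | zero => simpa using isUniUp_one
  | succ m ih => rw [pow_succ]; exact ih.mul' hu

lemma IsUniUp.inv' {u : GL (Fin n) E} (hu : IsUniUp u) : IsUniUp u⁻¹ := by
  have h1 : u ^ orderOf u = 1 := pow_orderOf_eq_one u
  have hpos : 0 < orderOf u := by
    have : Finite (GL (Fin n) E) := by infer_instance
    exact orderOf_pos u
  have : u⁻¹ = u ^ (orderOf u - 1) := by
    rw [eq_comm, eq_inv_iff_mul_eq_one, ← pow_succ, Nat.sub_add_cancel hpos, h1]
  rw [this]
  exact hu.pow' _

lemma isUniUp_entrywise (σ₀ : E ≃+* E) {u : GL (Fin n) E} (hu : IsUniUp u) :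
    IsUniUp (entrywiseHom n σ₀ u) := by
  have hval : ∀ i j, ((entrywiseHom n σ₀ u : GL (Fin n) E) : Matrix (Fin n) (Fin n) E) i j
      = σ₀ ((u : Matrix (Fin n) (Fin n) E) i j) := by
    intro i j; rfl
  constructor
  · intro i j hij
    rw [hval, hu.1 i j hij, map_zero]
  · intro i
    rw [hval, hu.2 i, RingEquiv.map_one]

lemma Jmat_conj_apply (M : Matrix (Fin n) (Fin n) E) (i j : Fin n) :
    (Jmat n E * M * Jmat n E) i j = M i.rev j.rev := by
  have h1 : (Jmat n E * M) i j = M i.rev j := by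
    rw [Matrix.mul_apply]
    rw [Finset.sum_eq_single i.rev]
    · simp [Jmat]
    · intro b _ hb; simp [Jmat, hb]
    · simp
  rw [Matrix.mul_apply]
  rw [Finset.sum_eq_single j.rev]
  · have : (Jmat n E) j.rev j = 1 := by simp [Jmat]
    rw [this, mul_one]
    rw [Matrix.mul_apply]
    rw [Finset.sum_eq_single i.rev]
    · simp [Jmat]
    · intro b _ hb; simp [Jmat, hb]
    · simp
  · intro b _ hb
    have : (Jmat n E) b j = 0 := by
      simp only [Jmat, Matrix.of_apply, ite_eq_right_iff]
      intro h
      exact absurd (by rw [h, Fin.rev_rev]) hb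
    rw [this, mul_zero]
  · simp

lemma isUniUp_tau (σ₀ : E ≃+* E) {u : GL (Fin n) E} (hu : IsUniUp u) :
    IsUniUp (tauHom n σ₀ u) := by
  have hEu : IsUniUp ((entrywiseHom n σ₀ u)⁻¹) := (isUniUp_entrywise σ₀ hu).inv'
  set m : Matrix (Fin n) (Fin n) E := (((entrywiseHom n σ₀ u)⁻¹ : GL (Fin n) E) :
      Matrix (Fin n) (Fin n) E) with hm
  have hval : ∀ i j, ((tauHom n σ₀ u : GL (Fin n) E) : Matrix (Fin n) (Fin n) E) i j
      = m j.rev i.rev := by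
    intro i j
    have : ((tauHom n σ₀ u : GL (Fin n) E) : Matrix (Fin n) (Fin n) E)
        = Jmat n E * mᵀ * Jmat n E := by
      show ((Jgl n E * transposeGL ((entrywiseHom n σ₀ u)⁻¹) * (Jgl n E)⁻¹ : GL (Fin n) E) :
        Matrix (Fin n) (Fin n) E) = _
      rw [Units.val_mul, Units.val_mul]
      rfl
    rw [this, Jmat_conj_apply]
    rfl
  constructor
  · intro i j hij
    rw [hval]
    exact hEu.1 j.rev i.rev (by simpa using hij)
  · intro i
    rw [hval]
    exact hEu.2 i.rev

lemma entrywise_invol (σ₀ : E ≃+* E) (hσ : ∀ x : E, σ₀ (σ₀ x) = x) (g : GL (Fin n) E) :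
    entrywiseHom n σ₀ (entrywiseHom n σ₀ g) = g := by
  ext i j
  show σ₀ (σ₀ ((g : Matrix (Fin n) (Fin n) E) i j)) = _
  rw [hσ]

lemma transposeGL_transposeGL (g : GL (Fin n) E) : transposeGL (transposeGL g) = g := by
  ext; simp [transposeGL]

lemma transposeGL_inv (g : GL (Fin n) E) : transposeGL g⁻¹ = (transposeGL g)⁻¹ := by
  ext; rfl

lemma entrywise_transposeGL (σ₀ : E ≃+* E) (g : GL (Fin n) E) :
    entrywiseHom n σ₀ (transposeGL g) = transposeGL (entrywiseHom n σ₀ g) := by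
  ext i j; rfl

lemma entrywise_Jgl (σ₀ : E ≃+* E) : entrywiseHom n σ₀ (Jgl n E) = Jgl n E := by
  ext i j
  show σ₀ ((Jmat n E) i j) = (Jmat n E) i j
  simp only [Jmat, Matrix.of_apply]
  split <;> [exact RingEquiv.map_one σ₀; exact RingEquiv.map_zero σ₀]

lemma transposeGL_Jgl : transposeGL (Jgl n E) = Jgl n E := by
  ext i j
  show (Jmat n E) j i = (Jmat n E) i j
  simp only [Jmat, Matrix.of_apply]
  by_cases h : j = i.rev
  · subst h; simp [Fin.rev_rev]
  · rw [if_neg h, if_neg (fun hc => h (by rw [hc, Fin.rev_rev]))]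

lemma Jgl_mul_Jgl : Jgl n E * Jgl n E = 1 := by
  apply Units.ext
  rw [Units.val_mul, Units.val_one]
  exact Jmat_mul_Jmat

lemma Jgl_inv : (Jgl n E)⁻¹ = Jgl n E := by
  rw [eq_comm, eq_inv_iff_mul_eq_one, Jgl_mul_Jgl]

lemma tauHom_apply (σ₀ : E ≃+* E) (g : GL (Fin n) E) :
    tauHom n σ₀ g = Jgl n E * transposeGL ((entrywiseHom n σ₀ g)⁻¹) * (Jgl n E)⁻¹ := rfl

lemma tau_invol (σ₀ : E ≃+* E) (hσ : ∀ x : E, σ₀ (σ₀ x) = x) (g : GL (Fin n) E) :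
    tauHom n σ₀ (tauHom n σ₀ g) = g := by
  set f : GL (Fin n) E → GL (Fin n) E :=
    fun x => transposeGL ((entrywiseHom n σ₀ x)⁻¹) with hf
  have hfmul : ∀ x y : GL (Fin n) E, f (x * y) = f x * f y := by
    intro x y
    simp only [hf]
    rw [_root_.map_mul, _root_.mul_inv_rev, transposeGL_mul]
  have hfJ : f (Jgl n E) = Jgl n E := by
    simp only [hf]
    rw [entrywise_Jgl, Jgl_inv, transposeGL_Jgl]
  have hff : ∀ x : GL (Fin n) E, f (f x) = x := by
    intro x
    simp only [hf]
    rw [entrywise_transposeGL, _root_.map_inv, entrywise_invol σ₀ hσ,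
      ← transposeGL_inv, inv_inv, transposeGL_transposeGL]
  have htau : ∀ x : GL (Fin n) E, tauHom n σ₀ x = Jgl n E * f x * Jgl n E := by
    intro x
    rw [tauHom_apply, Jgl_inv]
  have h2 : ∀ a : GL (Fin n) E,
      Jgl n E * (Jgl n E * a * Jgl n E) * Jgl n E = a := by
    intro a
    calc Jgl n E * (Jgl n E * a * Jgl n E) * Jgl n E
        = (Jgl n E * Jgl n E) * a * (Jgl n E * Jgl n E) := by group
      _ = a := by rw [Jgl_mul_Jgl, one_mul, mul_one]
  rw [htau, htau, hfmul, hfmul, hfJ, hff]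
  exact h2 g

end Aux

theorem mu_is_whittaker_functional {n q : ℕ} {E : Type*} [Field E] [Fintype E] [DecidableEq E]
    (hcard : Fintype.card E = q ^ 2)
    (σ₀ : E ≃+* E) (hσ₀ : ∀ x : E, σ₀ x = x ^ q)
    (ι κ : GL (Fin n) E →* GL (Fin n) E)
    (hικ : (ι = entrywiseHom n σ₀ ∧ κ = tauHom n σ₀) ∨
           (ι = tauHom n σ₀ ∧ κ = entrywiseHom n σ₀))
    {V : Type*} [AddCommGroup V] [Module ℂ V] [FiniteDimensional ℂ V]
    (π : Representation ℂ (GL (Fin n) E) V)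
    (hirr : IsIrreducibleRep π)
    (ψ : GL (Fin n) E → ℂ) (hψ : IsNondegChar ψ)
    (hψκ : ∀ u : GL (Fin n) E, IsUniUp u → ψ (κ u) = ψ u)
    (hgen : IsGeneric ψ π)
    (W : GL (Fin n) E → ℂ) (hW : InWhittakerModel ψ π W)
    (u : GL (Fin n) E) (hu : IsUniUp u) :
    ((fixFinset ι).card : ℂ)⁻¹ * ∑ g ∈ normOneFinset κ, W (g * u) =
      ψ u * (((fixFinset ι).card : ℂ)⁻¹ * ∑ g ∈ normOneFinset κ, W g) := by
  have hσ : ∀ x : E, σ₀ (σ₀ x) = x := by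
    intro x
    rw [hσ₀, hσ₀, ← pow_mul, ← pow_two, ← hcard, FiniteField.pow_card]
  obtain ⟨hκinv, hκN⟩ : (∀ g : GL (Fin n) E, κ (κ g) = g) ∧
      (∀ v : GL (Fin n) E, IsUniUp v → IsUniUp (κ v)) := by
    rcases hικ with ⟨_, hκ⟩ | ⟨_, hκ⟩ <;> subst hκ
    · exact ⟨tau_invol σ₀ hσ, fun v hv => isUniUp_tau σ₀ hv⟩
    · exact ⟨entrywise_invol σ₀ hσ, fun v hv => isUniUp_entrywise σ₀ hv⟩
  have hmem : ∀ g : GL (Fin n) E, g ∈ normOneFinset κ ↔ g * κ g = 1 := by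
    intro g; simp [normOneFinset]
  have key : ∑ g ∈ normOneFinset κ, W (g * u) = ∑ g ∈ normOneFinset κ, ψ u * W g := by
    refine Finset.sum_nbij' (fun g => (κ u)⁻¹ * g * u) (fun g => κ u * g * u⁻¹)
      ?_ ?_ ?_ ?_ ?_
    · intro g hg
      rw [hmem] at hg ⊢
      rw [_root_.map_mul, _root_.map_mul, _root_.map_inv, hκinv]
      calc (κ u)⁻¹ * g * u * (u⁻¹ * κ g * κ u)
          = (κ u)⁻¹ * (g * κ g) * κ u := by group
        _ = 1 := by rw [hg]; group
    · intro g hg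
      rw [hmem] at hg ⊢
      rw [_root_.map_mul, _root_.map_mul, _root_.map_inv, hκinv]
      calc κ u * g * u⁻¹ * (u * κ g * (κ u)⁻¹)
          = κ u * (g * κ g) * (κ u)⁻¹ := by group
        _ = 1 := by rw [hg]; group
    · intro g _; group
    · intro g _; group
    · intro g _
      have h1 : g * u = κ u * ((κ u)⁻¹ * g * u) := by group
      rw [h1, hW.1 (κ u) _ (hκN u hu), hψκ u hu]
  rw [key, ← Finset.mul_sum]
  ring

end TestVectors
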